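/- Every oriented graph D on n ≥ 3 vertices with no transmitter is an induced subdigraph of an oriented graph W on 2n vertices such that the weak kings of W are exactly the vertices of D. -/

import Mathlib

open Finset

/-- Outdegree of a vertex in a digraph given by relation `R`. -/
def outdeg {V : Type*} [Fintype V] (R : V → V → Prop) [DecidableRel R] (v : V) : ℕ :=
  (Finset.univ.filter (fun u => R v u)).card

/-- Indegree of a vertex. -/
def indeg {V : Type*} [Fintype V] (R : V → V → Prop) [DecidableRel R] (v : V) : ℕ :=
  (Finset.univ.filter (fun u => R u v)).card

/-- Number of vertices `u ≠ v` joined to `v` by no arc. -/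
def dstar {V : Type*} [Fintype V] [DecidableEq V] (R : V → V → Prop) [DecidableRel R] (v : V) : ℕ :=
  (Finset.univ.filter (fun u => u ≠ v ∧ ¬ R u v ∧ ¬ R v u)).card

/-- The score `s(v) = n - 1 + d⁺(v) - d⁻(v)` as an integer. -/
def score {V : Type*} [Fintype V] (R : V → V → Prop) [DecidableRel R] (v : V) : ℤ :=
  (Fintype.card V : ℤ) - 1 + (outdeg R v : ℤ) - (indeg R v : ℤ)

/-- `v` is weakly reachable within two steps from `u`. -/
def WeakReach {V : Type*} (R : V → V → Prop) (u v : V) : Prop :=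
  R u v ∨ (¬ R u v ∧ ¬ R v u) ∨
    ∃ w, (R u w ∧ R w v) ∨ (R u w ∧ ¬ R w v ∧ ¬ R v w) ∨ (¬ R u w ∧ ¬ R w u ∧ R w v)

/-- `v` is reachable within two steps from `u`. -/
def Reach {V : Type*} (R : V → V → Prop) (u v : V) : Prop :=
  R u v ∨ ∃ w, R u w ∧ R w v

/-- A weak king: every other vertex is weakly reachable within two steps from `u`. -/
def WeakKing {V : Type*} (R : V → V → Prop) (u : V) : Prop :=
  ∀ v, v ≠ u → WeakReach R u v

/-- A weak serf: `u` is weakly reachable within two steps from every other vertex. -/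
def WeakSerf {V : Type*} (R : V → V → Prop) (u : V) : Prop :=
  ∀ v, v ≠ u → WeakReach R v u

/-- A king: every other vertex is reachable within two steps from `u`. -/
def King {V : Type*} (R : V → V → Prop) (u : V) : Prop :=
  ∀ v, v ≠ u → Reach R u v

/-- An oriented graph: a loopless digraph with no symmetric pair of arcs. -/
def IsOriented {V : Type*} (R : V → V → Prop) : Prop :=
  (∀ v, ¬ R v v) ∧ (∀ u v, R u v → ¬ R v u)

theorem embed_weak_kings {V : Type*} [Fintype V] (hV : 3 ≤ Fintype.card V)
    (R : V → V → Prop) (hR : IsOriented R) (hnt : ∀ v : V, ∃ u : V, R u v) :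
    ∃ R' : (V ⊕ V) → (V ⊕ V) → Prop, IsOriented R' ∧
      (∀ a b : V, R' (Sum.inl a) (Sum.inl b) ↔ R a b) ∧
      (∀ x : V ⊕ V, WeakKing R' x ↔ ∃ a : V, x = Sum.inl a) := by
  classical
  obtain ⟨hirr, hasym⟩ := hR
  refine ⟨fun x y =>
    match x, y with
    | Sum.inl a, Sum.inl b => R a b
    | Sum.inr a, Sum.inr b => R a b
    | Sum.inl a, Sum.inr b => a ≠ b
    | Sum.inr a, Sum.inl b => a = b, ⟨?_, ?_⟩, ?_, ?_⟩
  · rintro (a | a)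
    · exact hirr a
    · exact hirr a
  · rintro (a | a) (b | b) h
    · exact hasym a b h
    · exact fun h2 => h (h2 : b = a).symm
    · exact fun h2 => (h2 : b ≠ a) (h : a = b).symm
    · exact hasym a b h
  · intro a b; exact Iff.rfl
  · rintro (a | a)
    · -- inl a is a weak king
      constructor
      · intro _; exact ⟨a, rfl⟩
      intro _
      rintro (b | b) hne
      · have hba : b ≠ a := fun h => hne (by rw [h])
        by_cases hab : R a b
        · exact Or.inl hab
        · by_cases hba' : R b a
          · exact Or.inr (Or.inr ⟨Sum.inr b,
              Or.inl ⟨fun h => hba h.symm, rfl⟩⟩)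
          · exact Or.inr (Or.inl ⟨hab, hba'⟩)
      · by_cases hab : a = b
        · subst hab
          obtain ⟨u, hu⟩ := hnt a
          have hua : u ≠ a := fun h => hirr a (h ▸ hu)
          exact Or.inr (Or.inr ⟨Sum.inr u,
            Or.inl ⟨fun h => hua h.symm, hu⟩⟩)
        · exact Or.inl hab
    · -- inr a is not a weak king
      constructor
      · intro hk
        obtain ⟨b, hb⟩ := hnt a
        have hba : b ≠ a := fun h => hirr a (h ▸ hb)
        exfalso
        have hwr := hk (Sum.inl b) (fun h => Sum.inl_ne_inr h)
        rcases hwr with h | ⟨h1, h2⟩ | ⟨w, hw⟩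
        · exact hba (h : a = b).symm
        · exact h2 hba
        · rcases w with c | c
          · rcases hw with ⟨h1, h2⟩ | ⟨h1, h2, h3⟩ | ⟨h1, h2, h3⟩
            · have hac : a = c := h1
              subst hac
              exact hasym b a hb h2
            · have hac : a = c := h1
              subst hac
              exact (h3 : ¬ R b a) hb
            · exact (h1 : ¬ a = c) ((not_not.mp (h2 : ¬ c ≠ a)).symm)
          · rcases hw with ⟨h1, h2⟩ | ⟨h1, h2, h3⟩ | ⟨h1, h2, h3⟩
            · exact hasym b a hb ((show c = b from h2) ▸ (h1 : R a c))
            · exact h2 (not_not.mp (fun h => h3 (fun h' => h h'.symm)))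
            · exact (h2 : ¬ R c a) ((show c = b from h3).symm ▸ hb)
      · rintro ⟨b, hb⟩; exact (Sum.inr_ne_inl hb).elim
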